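/- arXiv:2210.10471 — 2 statements merged into one kernel-verified Lean document; each statement's English description precedes it below -/
import Mathlib

section
/- Let 𝒜 be an L-algebra on an infinite-dimensional real Banach space X. Then the algebra 𝔻 of all ℝ-linear endomorphisms of X^F commuting with the restriction to X^F of every operator in 𝒜^F is finite-dimensional as a real vector space. -/
open Filter Topology

noncomputable section

variable {X : Type*} [NormedAddCommGroup X] [NormedSpace ℝ X]

/-- A bounded operator is of finite rank if its range is finite-dimensional. -/
def FiniteRank (T : X →L[ℝ] X) : Prop :=
  FiniteDimensional ℝ (LinearMap.range (T : X →ₗ[ℝ] X))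

/-- Transitivity: every orbit of a nonzero vector is dense. -/
def IsTransitiveAlg (A : Set (X →L[ℝ] X)) : Prop :=
  ∀ x : X, x ≠ 0 → ∀ y : X, ∀ ε > 0, ∃ T ∈ A, ‖T x - y‖ < ε

/-- A set of operators is an "L-set" if it is transitive and contains
a nonzero finite-rank operator. -/
def IsLSet (A : Set (X →L[ℝ] X)) : Prop :=
  IsTransitiveAlg A ∧ ∃ T ∈ A, T ≠ 0 ∧ FiniteRank T

/-- `A^F`: the finite-rank elements of `A`. -/
def AF (A : Set (X →L[ℝ] X)) : Set (X →L[ℝ] X) :=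
  {T | T ∈ A ∧ FiniteRank T}

/-- `X^F = span {T x : T ∈ A^F, x ∈ X}`. -/
def XF (A : Set (X →L[ℝ] X)) : Submodule ℝ X :=
  Submodule.span ℝ {y | ∃ T ∈ AF A, ∃ x : X, T x = y}

lemma mapsto_XF {A : Set (X →L[ℝ] X)} {T : X →L[ℝ] X} (hT : T ∈ AF A) :
    ∀ x ∈ XF A, (T : X →ₗ[ℝ] X) x ∈ XF A :=
  fun x _ => Submodule.subset_span ⟨T, hT, x, rfl⟩

/-- `𝔻`: the algebra of all `ℝ`-linear endomorphisms of `X^F` commuting with the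
restriction to `X^F` of every operator in `A^F`. -/
def DD (A : Set (X →L[ℝ] X)) : Subalgebra ℝ (Module.End ℝ (XF A)) :=
  Subalgebra.centralizer ℝ
    {S | ∃ T : X →L[ℝ] X, ∃ hT : T ∈ AF A, S = (T : X →ₗ[ℝ] X).restrict (mapsto_XF hT)}

def RealType (A : Set (X →L[ℝ] X)) : Prop := Nonempty (DD A ≃ₐ[ℝ] ℝ)
def ComplexType (A : Set (X →L[ℝ] X)) : Prop := Nonempty (DD A ≃ₐ[ℝ] ℂ)
def QuaternionType (A : Set (X →L[ℝ] X)) : Prop := Nonempty (DD A ≃ₐ[ℝ] Quaternion ℝ)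

/-- `A` is dense: on any finite linearly independent family, elements of `A`
approximate arbitrary prescribed values. -/
def IsDenseAlg (A : Set (X →L[ℝ] X)) : Prop :=
  ∀ ε > 0, ∀ n : ℕ, ∀ x : Fin n → X, LinearIndependent ℝ x →
    ∀ y : Fin n → X, ∃ T ∈ A, ∀ i, ‖T (x i) - y i‖ < ε

/-- `A` is `(1/k)`-dense. -/
def IsFracDense (k : ℕ) (A : Set (X →L[ℝ] X)) : Prop :=
  ∀ ε > 0, ∀ n : ℕ, ∀ x : Fin (k * n) → X, LinearIndependent ℝ x →
    ∀ y : Fin n → X, ∃ j : Fin n → Fin (k * n), ∃ T ∈ A,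
      ∀ i, ‖y i - T (x (j i))‖ < ε

/-- `T` lies in the closure of `A` in the strong operator topology. -/
def InSOTClosure (A : Set (X →L[ℝ] X)) (T : X →L[ℝ] X) : Prop :=
  ∀ ε > 0, ∀ s : Finset X, ∃ S ∈ A, ∀ x ∈ s, ‖S x - T x‖ < ε

/-- Closure of `A` in the strong operator topology. -/
def SOTcl (A : Set (X →L[ℝ] X)) : Set (X →L[ℝ] X) := {T | InSOTClosure A T}

/-- `A` is closed in the strong operator topology. -/
def SOTClosed (A : Set (X →L[ℝ] X)) : Prop :=
  ∀ T : X →L[ℝ] X, InSOTClosure A T → T ∈ A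

/-- A Lomonosov set: transitive, SOT-closed, containing a nonzero compact operator. -/
def IsLomonosov (A : Set (X →L[ℝ] X)) : Prop :=
  IsTransitiveAlg A ∧ SOTClosed A ∧ ∃ T ∈ A, T ≠ 0 ∧ IsCompactOperator (⇑T)

/-- Similarity of operator algebras. -/
def SimilarAlg (A B : Set (X →L[ℝ] X)) : Prop :=
  ∃ T : X ≃L[ℝ] X,
    (fun S => (T : X →L[ℝ] X).comp (S.comp ((T.symm : X →L[ℝ] X)))) '' A = B

/-- A partial complex structure: a densely defined operator `S` with `S ∘ S = -1`
(equivalently `S⁻¹ = -S`) mapping its domain onto itself. -/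
structure PCS (X : Type*) [NormedAddCommGroup X] [NormedSpace ℝ X] where
  domain : Submodule ℝ X
  dense' : Dense (domain : Set X)
  map : domain →ₗ[ℝ] domain
  anti : ∀ x : domain, map (map x) = -x

/-- A PCS is closed if its graph is closed in `X × X`. -/
def PCSClosed (S : PCS X) : Prop :=
  IsClosed (Set.range fun x : S.domain => ((x : X), (S.map x : X)))

/-- The algebra `𝒜_S` of all bounded operators leaving `D(S)` invariant and
commuting with `S` on `D(S)`. -/
def AlgS (S : PCS X) : Set (X →L[ℝ] X) :=
  {T | ∀ x : S.domain, ∃ y : S.domain, (y : X) = T x ∧ T (S.map x : X) = (S.map y : X)}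

/-- A representation of the quaternion group `G_ℍ` by linear bijections of a dense
subspace of `X`, with `π(1) = id` and `π(-1) = -id`. -/
structure QRep (X : Type*) [NormedAddCommGroup X] [NormedSpace ℝ X] where
  domain : Submodule ℝ X
  dense' : Dense (domain : Set X)
  pi : QuaternionGroup 2 → Module.End ℝ domain
  pi_one : pi 1 = 1
  pi_mul : ∀ g h, pi (g * h) = pi g * pi h
  pi_neg_one : pi (QuaternionGroup.a 2) = -1

/-- The representation is closed. -/
def QRepClosed (ρ : QRep X) : Prop :=
  ∀ (x : ℕ → ρ.domain) (w : QuaternionGroup 2 → X),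
    (∀ g, Tendsto (fun n => (ρ.pi g (x n) : X)) atTop (𝓝 (w g))) →
    ∃ z : ρ.domain, ∀ g, w g = (ρ.pi g z : X)

/-- The representation is regular: the functionals bounded on the orbit of the
representation are weak*-dense in the dual. -/
def QRepRegular (ρ : QRep X) : Prop :=
  Dense ((StrongDual.toWeakDual) ''
    {f : StrongDual ℝ X |
      ∃ C > 0, ∀ g : QuaternionGroup 2, ∀ x : ρ.domain, |f (ρ.pi g x : X)| ≤ C * ‖(x : X)‖})

/-- The algebra `𝒜_π`. -/
def AlgPi (ρ : QRep X) : Set (X →L[ℝ] X) :=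
  {T | ∀ x : ρ.domain, ∃ y : ρ.domain, (y : X) = T x ∧
    ∀ g : QuaternionGroup 2, T (ρ.pi g x : X) = (ρ.pi g y : X)}


/-- Composing a finite-rank operator with a bounded operator on the left gives a
finite-rank operator. -/
lemma finiteRank_comp_left {S T : X →L[ℝ] X} (hT : FiniteRank T) : FiniteRank (S * T) := by
  unfold FiniteRank at *
  haveI := hT
  have h : LinearMap.range ((S * T : X →L[ℝ] X) : X →ₗ[ℝ] X) = (LinearMap.range (T : X →ₗ[ℝ] X)).map (S : X →ₗ[ℝ] X) := by
    have : ((S * T : X →L[ℝ] X) : X →ₗ[ℝ] X)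
        = (S : X →ₗ[ℝ] X).comp (T : X →ₗ[ℝ] X) := rfl
    rw [show LinearMap.range ((S * T : X →L[ℝ] X) : X →ₗ[ℝ] X) = LinearMap.range ((S * T : X →L[ℝ] X) : X →ₗ[ℝ] X) from rfl,
      this, LinearMap.range_comp]
  rw [h]
  exact Module.Finite.map _ _

/-- `X^F` is dense in `X` for an L-set. -/
lemma dense_XF_of_LSet {A : NonUnitalSubalgebra ℝ (X →L[ℝ] X)}
    (hA : IsLSet (A : Set (X →L[ℝ] X))) :
    Dense ((XF (A : Set (X →L[ℝ] X)) : Submodule ℝ X) : Set X) := by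
  obtain ⟨htr, T0, hT0A, hT0ne, hT0fr⟩ := hA
  obtain ⟨u, hu⟩ : ∃ u, T0 u ≠ 0 := by
    by_contra h
    push_neg at h
    exact hT0ne (ContinuousLinearMap.ext fun u => h u)
  rw [Metric.dense_iff]
  intro y r hr
  obtain ⟨S, hS, hSy⟩ := htr (T0 u) hu y r hr
  refine ⟨S (T0 u), Metric.mem_ball.2 ?_, ?_⟩
  · rw [dist_eq_norm]; exact hSy
  · exact Submodule.subset_span ⟨S * T0, ⟨A.mul_mem hS hT0A, finiteRank_comp_left hT0fr⟩, u, rfl⟩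

/-- `A^F` is transitive for an L-set. -/
lemma AF_transitive {A : NonUnitalSubalgebra ℝ (X →L[ℝ] X)}
    (hA : IsLSet (A : Set (X →L[ℝ] X))) :
    IsTransitiveAlg (AF (A : Set (X →L[ℝ] X))) := by
  obtain ⟨htr, T0, hT0A, hT0ne, hT0fr⟩ := hA
  intro x hx y ε hε
  by_cases h : ∃ T ∈ AF (A : Set (X →L[ℝ] X)), T x ≠ 0
  · obtain ⟨T, hT, hTx⟩ := h
    obtain ⟨S, hS, hSy⟩ := htr (T x) hTx y ε hε
    exact ⟨S * T, ⟨A.mul_mem hS hT.1, finiteRank_comp_left hT.2⟩, hSy⟩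
  · exfalso
    push_neg at h
    obtain ⟨u, hu⟩ : ∃ u, T0 u ≠ 0 := by
      by_contra h'
      push_neg at h'
      exact hT0ne (ContinuousLinearMap.ext fun u => h' u)
    have hTu : (0:ℝ) < ‖T0 u‖ := norm_pos_iff.2 hu
    have hden : (0:ℝ) < ‖T0 u‖ / (‖T0‖ + 1) := by positivity
    obtain ⟨S, hS, hSu⟩ := htr x hx u _ hden
    have hTS : T0 * S ∈ AF (A : Set (X →L[ℝ] X)) :=
      ⟨A.mul_mem hT0A hS, by
        unfold FiniteRank
        haveI : FiniteDimensional ℝ (LinearMap.range (T0 : X →ₗ[ℝ] X)) := hT0fr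
        exact Submodule.finiteDimensional_of_le (by
          rintro _ ⟨z, rfl⟩
          exact ⟨S z, rfl⟩ : LinearMap.range ((T0 * S : X →L[ℝ] X) : X →ₗ[ℝ] X) ≤ LinearMap.range (T0 : X →ₗ[ℝ] X))⟩
    have h1 : T0 (S x) = 0 := h _ hTS
    have h2 : ‖T0 u‖ = ‖T0 (S x - u)‖ := by
      rw [map_sub, h1, zero_sub, norm_neg]
    have h3 : ‖T0 (S x - u)‖ ≤ ‖T0‖ * ‖S x - u‖ := T0.le_opNorm _
    have h4 : ‖T0‖ * ‖S x - u‖ < ‖T0‖ * (‖T0 u‖ / (‖T0‖ + 1)) + ‖T0 u‖ / (‖T0‖ + 1) := by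
      have hn : (0:ℝ) ≤ ‖T0‖ := norm_nonneg _
      nlinarith [hSu]
    have h5 : ‖T0‖ * (‖T0 u‖ / (‖T0‖ + 1)) + ‖T0 u‖ / (‖T0‖ + 1) = ‖T0 u‖ := by
      field_simp
    linarith [h2 ▸ h3]

/-- For a finite-rank operator `T` and a dense subspace `K`, `T(K) = range T`. -/
lemma map_dense_eq_range {T : X →L[ℝ] X} (hT : FiniteRank T) {K : Submodule ℝ X}
    (hK : Dense (K : Set X)) :
    K.map (T : X →ₗ[ℝ] X) = LinearMap.range (T : X →ₗ[ℝ] X) := by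
  haveI : FiniteDimensional ℝ (LinearMap.range (T : X →ₗ[ℝ] X)) := hT
  have hle : K.map (T : X →ₗ[ℝ] X) ≤ LinearMap.range (T : X →ₗ[ℝ] X) := by
    rintro _ ⟨x, -, rfl⟩; exact ⟨x, rfl⟩
  haveI : FiniteDimensional ℝ (K.map (T : X →ₗ[ℝ] X)) :=
    Submodule.finiteDimensional_of_le hle
  refine le_antisymm hle ?_
  have hclosed : IsClosed ((K.map (T : X →ₗ[ℝ] X)) : Set X) :=
    Submodule.closed_of_finiteDimensional _
  rintro _ ⟨x, rfl⟩
  have h1 : (T : X →ₗ[ℝ] X) x ∈ ⇑T '' closure (K : Set X) :=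
    ⟨x, by rw [hK.closure_eq]; trivial, rfl⟩
  have h2 : ⇑T '' closure (K : Set X) ⊆ closure (⇑T '' (K : Set X)) :=
    image_closure_subset_closure_image T.continuous
  have h3 : (⇑T '' (K : Set X)) = ((K.map (T : X →ₗ[ℝ] X)) : Set X) := by
    rw [Submodule.map_coe]; rfl
  have := h2 h1
  rw [h3, hclosed.closure_eq] at this
  exact this

/-- A dense `A^F`-invariant subspace contains `X^F`. -/
lemma XF_le_of_dense_invariant {A : Set (X →L[ℝ] X)} {K : Submodule ℝ X}
    (hK : Dense (K : Set X))
    (hinv : ∀ T ∈ AF A, ∀ x ∈ K, T x ∈ K) : XF A ≤ K := by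
  apply Submodule.span_le.2
  rintro _ ⟨T, hT, x, rfl⟩
  have hmem : T x ∈ LinearMap.range (T : X →ₗ[ℝ] X) := ⟨x, rfl⟩
  rw [← map_dense_eq_range hT.2 hK] at hmem
  obtain ⟨k, hk, hkT⟩ := hmem
  exact hkT ▸ hinv T hT k hk

set_option synthInstance.maxHeartbeats 1000000
set_option maxHeartbeats 1000000

/-- For an L-algebra `𝒜`, the commutant `𝔻` of `𝒜^F` on `X^F` is
finite-dimensional as a real vector space. -/
theorem stmt4 {X : Type*} [NormedAddCommGroup X] [NormedSpace ℝ X] [CompleteSpace X]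
    (hinf : ¬ FiniteDimensional ℝ X)
    (A : NonUnitalSubalgebra ℝ (X →L[ℝ] X))
    (hA : IsLSet (A : Set (X →L[ℝ] X))) :
    FiniteDimensional ℝ (DD (A : Set (X →L[ℝ] X))) := by
  classical
  set 𝒜 : Set (X →L[ℝ] X) := (A : Set (X →L[ℝ] X)) with h𝒜
  obtain ⟨htr, T0, hT0A, hT0ne, hT0fr⟩ := hA
  have hA' : IsLSet 𝒜 := ⟨htr, T0, hT0A, hT0ne, hT0fr⟩
  have hdense : Dense ((XF 𝒜 : Submodule ℝ X) : Set X) := dense_XF_of_LSet hA'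
  have htrF : IsTransitiveAlg (AF 𝒜) := AF_transitive hA'
  have hT0AF : T0 ∈ AF 𝒜 := ⟨hT0A, hT0fr⟩
  set R0 : XF 𝒜 →ₗ[ℝ] XF 𝒜 := (T0 : X →ₗ[ℝ] X).restrict (mapsto_XF hT0AF) with hR0
  -- there is z in XF with T0 z ≠ 0
  obtain ⟨z, hzXF, hz⟩ : ∃ z, z ∈ (XF 𝒜 : Submodule ℝ X) ∧ T0 z ≠ 0 := by
    obtain ⟨u, hu⟩ : ∃ u, T0 u ≠ 0 := by
      by_contra h'
      push_neg at h'
      exact hT0ne (ContinuousLinearMap.ext fun u => h' u)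
    have hopen : IsOpen {x : X | T0 x ≠ 0} :=
      isOpen_compl_iff.2 (isClosed_singleton.preimage T0.continuous)
    obtain ⟨z, hz1, hz2⟩ := hdense.exists_mem_open hopen ⟨u, hu⟩
    exact ⟨z, hz1, hz2⟩
  set V : Submodule ℝ (XF 𝒜) := LinearMap.range R0 with hV
  -- V is finite-dimensional
  haveI hT0fd : FiniteDimensional ℝ (LinearMap.range (T0 : X →ₗ[ℝ] X)) := hT0fr
  have hVfd : FiniteDimensional ℝ V := by
    have hle : V.map (XF 𝒜).subtype ≤ LinearMap.range (T0 : X →ₗ[ℝ] X) := by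
      rintro _ ⟨_, ⟨w, rfl⟩, rfl⟩
      exact ⟨(w : X), rfl⟩
    haveI : FiniteDimensional ℝ (V.map (XF 𝒜).subtype) :=
      Submodule.finiteDimensional_of_le hle
    exact LinearEquiv.finiteDimensional
      (Submodule.equivMapOfInjective (XF 𝒜).subtype (XF 𝒜).injective_subtype V).symm
  -- V ≠ ⊥
  have hVne : ∃ v : XF 𝒜, v ∈ V ∧ v ≠ 0 := by
    refine ⟨R0 ⟨z, hzXF⟩, ⟨⟨z, hzXF⟩, rfl⟩, ?_⟩
    intro hcon
    apply hz
    have : ((R0 ⟨z, hzXF⟩ : XF 𝒜) : X) = 0 := by rw [hcon]; rfl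
    exact this
  -- commuting property
  have hcomm : ∀ D ∈ DD 𝒜, ∀ T (hT : T ∈ AF 𝒜), ∀ w : XF 𝒜,
      D ((T : X →ₗ[ℝ] X).restrict (mapsto_XF hT) w)
        = (T : X →ₗ[ℝ] X).restrict (mapsto_XF hT) (D w) := by
    intro D hD T hT w
    have := (Subalgebra.mem_centralizer_iff ℝ).1 hD
      ((T : X →ₗ[ℝ] X).restrict (mapsto_XF hT)) ⟨T, hT, rfl⟩
    have happ := congrArg (fun (f : Module.End ℝ (XF 𝒜)) => f w) this
    exact (happ).symm
  -- injectivity on nonzero kernel: D with nonzero kernel is zero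
  have hker : ∀ D : Module.End ℝ (XF 𝒜), D ∈ DD 𝒜 →
      (∃ w : XF 𝒜, w ≠ 0 ∧ D w = 0) → D = 0 := by
    intro D hD ⟨w, hwne, hwD⟩
    set K : Submodule ℝ X := (LinearMap.ker D).map (XF 𝒜).subtype with hK
    have hinv : ∀ T ∈ AF 𝒜, ∀ x ∈ K, T x ∈ K := by
      rintro T hT _ ⟨k, hk, rfl⟩
      simp only [SetLike.mem_coe, LinearMap.mem_ker] at hk
      refine ⟨(T : X →ₗ[ℝ] X).restrict (mapsto_XF hT) k, ?_, rfl⟩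
      simp only [SetLike.mem_coe, LinearMap.mem_ker]
      rw [hcomm D hD T hT k, hk, map_zero]
    have hwK : ((w : X)) ∈ K := ⟨w, hwD, rfl⟩
    have hwXne : (w : X) ≠ 0 := fun hc => hwne (Subtype.ext hc)
    have hKdense : Dense (K : Set X) := by
      rw [Metric.dense_iff]
      intro y r hr
      obtain ⟨T, hT, hTy⟩ := htrF (w : X) hwXne y r hr
      exact ⟨T (w : X), Metric.mem_ball.2 (by rw [dist_eq_norm]; exact hTy),
        hinv T hT _ hwK⟩
    have hle : XF 𝒜 ≤ K := XF_le_of_dense_invariant hKdense hinv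
    ext v
    obtain ⟨k, hk, hkv⟩ := hle v.2
    have : k = v := Subtype.ext hkv
    rw [← this]
    simpa using LinearMap.mem_ker.1 hk
  -- D maps V to V
  have hmapsV : ∀ D : DD 𝒜, ∀ v ∈ V, (D : Module.End ℝ (XF 𝒜)) v ∈ V := by
    rintro D _ ⟨u, rfl⟩
    exact ⟨(D : Module.End ℝ (XF 𝒜)) u, (hcomm D D.2 T0 hT0AF u).symm⟩
  -- the restriction map Φ : DD 𝒜 →ₗ End V
  let Φ : DD 𝒜 →ₗ[ℝ] (V →ₗ[ℝ] V) :=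
    { toFun := fun D => ((D : Module.End ℝ (XF 𝒜)).restrict (hmapsV D))
      map_add' := by
        intro D E
        ext v
        simp [LinearMap.restrict_apply]
      map_smul' := by
        intro c D
        ext v
        simp [LinearMap.restrict_apply] }
  have hΦinj : Function.Injective Φ := by
    refine (LinearMap.ker_eq_bot (M := DD 𝒜) (M₂ := V →ₗ[ℝ] V) (f := Φ)).1 (LinearMap.ker_eq_bot'.2 ?_)
    intro D hzero
    obtain ⟨v, hvV, hvne⟩ := hVne
    have hveq : (D : Module.End ℝ (XF 𝒜)) v = 0 := by
      have := congrArg (fun f : V →ₗ[ℝ] V => ((f ⟨v, hvV⟩ : V) : XF 𝒜)) hzero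
      simpa [Φ, LinearMap.restrict_apply] using this
    exact Subtype.ext (hker _ D.2 ⟨v, hvne, hveq⟩)
  haveI : FiniteDimensional ℝ V := hVfd
  exact FiniteDimensional.of_injective (V := DD 𝒜) (V₂ := V →ₗ[ℝ] V) Φ hΦinj

end
end

section
/- Let 𝒜 be an L-algebra on an infinite-dimensional real Banach space X and let 𝒜̄ be its closure in the strong operator topology (which is again an L-algebra). Then 𝒜 is of real type (respectively complex type, respectively quaternion type) if and only if 𝒜̄ is of real type (respectively complex type, respectively quaternion type). -/
open Filter Topology

noncomputable section

variable {X : Type*} [NormedAddCommGroup X] [NormedSpace ℝ X]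

section Stmt8Aux

variable {X : Type*} [NormedAddCommGroup X] [NormedSpace ℝ X]

lemma FiniteRank.of_le {T S : X →L[ℝ] X} (hS : FiniteRank S)
    (h : LinearMap.range (T : X →ₗ[ℝ] X) ≤ LinearMap.range (S : X →ₗ[ℝ] X)) : FiniteRank T := by
  have : FiniteDimensional ℝ (LinearMap.range (S : X →ₗ[ℝ] X)) := hS
  exact Submodule.finiteDimensional_of_le h

lemma finiteRank_zero : FiniteRank (0 : X →L[ℝ] X) := by
  have : FiniteDimensional ℝ (⊥ : Submodule ℝ X) := inferInstance
  exact Submodule.finiteDimensional_of_le (S₂ := (⊥ : Submodule ℝ X)) (by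
    rintro y ⟨x, rfl⟩
    simp)

lemma FiniteRank.add {T S : X →L[ℝ] X} (hT : FiniteRank T) (hS : FiniteRank S) :
    FiniteRank (T + S) := by
  have h1 : FiniteDimensional ℝ (LinearMap.range (T : X →ₗ[ℝ] X)) := hT
  have h2 : FiniteDimensional ℝ (LinearMap.range (S : X →ₗ[ℝ] X)) := hS
  have : FiniteDimensional ℝ ↥(LinearMap.range (T : X →ₗ[ℝ] X) ⊔ LinearMap.range (S : X →ₗ[ℝ] X)) :=
    Submodule.finiteDimensional_sup _ _
  exact Submodule.finiteDimensional_of_le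
    (S₂ := LinearMap.range (T : X →ₗ[ℝ] X) ⊔ LinearMap.range (S : X →ₗ[ℝ] X)) (by
    rintro y ⟨x, rfl⟩
    exact Submodule.mem_sup.2 ⟨T x, ⟨x, rfl⟩, S x, ⟨x, rfl⟩, rfl⟩)

lemma FiniteRank.smul (c : ℝ) {T : X →L[ℝ] X} (hT : FiniteRank T) :
    FiniteRank (c • T) :=
  hT.of_le (by
    rintro y ⟨x, rfl⟩
    exact Submodule.smul_mem _ c ⟨x, rfl⟩)

lemma FiniteRank.mul {T : X →L[ℝ] X} (hT : FiniteRank T) (S : X →L[ℝ] X) :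
    FiniteRank (T * S) :=
  hT.of_le (by
    rintro y ⟨x, rfl⟩
    exact ⟨S x, rfl⟩)

lemma subset_SOTcl (A : Set (X →L[ℝ] X)) : A ⊆ SOTcl A := by
  intro T hT ε hε s
  exact ⟨T, hT, fun x _ => by simpa using hε⟩

variable (A : NonUnitalSubalgebra ℝ (X →L[ℝ] X))

lemma SOTcl_add {T₁ T₂ : X →L[ℝ] X} (h₁ : T₁ ∈ SOTcl (A : Set (X →L[ℝ] X)))
    (h₂ : T₂ ∈ SOTcl (A : Set (X →L[ℝ] X))) :
    T₁ + T₂ ∈ SOTcl (A : Set (X →L[ℝ] X)) := by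
  intro ε hε s
  obtain ⟨S₁, hS₁, hA₁⟩ := h₁ (ε / 2) (by linarith) s
  obtain ⟨S₂, hS₂, hA₂⟩ := h₂ (ε / 2) (by linarith) s
  refine ⟨S₁ + S₂, add_mem hS₁ hS₂, fun x hx => ?_⟩
  have e : (S₁ + S₂) x - (T₁ + T₂) x = (S₁ x - T₁ x) + (S₂ x - T₂ x) := by
    simp only [ContinuousLinearMap.add_apply]; abel
  rw [e]
  calc ‖(S₁ x - T₁ x) + (S₂ x - T₂ x)‖ ≤ ‖S₁ x - T₁ x‖ + ‖S₂ x - T₂ x‖ := norm_add_le _ _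
    _ < ε := by have := hA₁ x hx; have := hA₂ x hx; linarith

lemma SOTcl_smul (c : ℝ) {T : X →L[ℝ] X} (h : T ∈ SOTcl (A : Set (X →L[ℝ] X))) :
    c • T ∈ SOTcl (A : Set (X →L[ℝ] X)) := by
  intro ε hε s
  obtain ⟨S, hS, hSa⟩ := h (ε / (|c| + 1)) (by positivity) s
  refine ⟨c • S, SMulMemClass.smul_mem c hS, fun x hx => ?_⟩
  have e : (c • S) x - (c • T) x = c • (S x - T x) := by
    simp only [ContinuousLinearMap.smul_apply]; rw [smul_sub]
  rw [e, norm_smul]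
  have h1 := hSa x hx
  have h2 : ‖S x - T x‖ ≥ 0 := norm_nonneg _
  have h3 : |c| ≥ 0 := abs_nonneg c
  have h4 : (|c| + 1) * ‖S x - T x‖ < ε := by
    rw [lt_div_iff₀ (by positivity)] at h1
    linarith [h1]
  calc ‖c‖ * ‖S x - T x‖ ≤ (|c| + 1) * ‖S x - T x‖ := by
        rw [Real.norm_eq_abs]; nlinarith
    _ < ε := h4

lemma SOTcl_mul {T₁ T₂ : X →L[ℝ] X} (h₁ : T₁ ∈ SOTcl (A : Set (X →L[ℝ] X)))
    (h₂ : T₂ ∈ SOTcl (A : Set (X →L[ℝ] X))) :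
    T₁ * T₂ ∈ SOTcl (A : Set (X →L[ℝ] X)) := by
  intro ε hε s
  obtain ⟨S₂, hS₂, hA₂⟩ := h₂ (ε / (2 * (‖T₁‖ + 1))) (by positivity) s
  classical
  obtain ⟨S₁, hS₁, hA₁⟩ := h₁ (ε / 2) (by linarith) (s.image fun x => S₂ x)
  refine ⟨S₁ * S₂, mul_mem hS₁ hS₂, fun x hx => ?_⟩
  have key1 : ‖S₁ (S₂ x) - T₁ (S₂ x)‖ < ε / 2 := hA₁ _ (Finset.mem_image_of_mem _ hx)
  have key2 : ‖T₁ (S₂ x) - T₁ (T₂ x)‖ ≤ ‖T₁‖ * ‖S₂ x - T₂ x‖ := by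
    rw [← map_sub]; exact T₁.le_opNorm _
  have key3 : ‖S₂ x - T₂ x‖ < ε / (2 * (‖T₁‖ + 1)) := hA₂ x hx
  have hT1 : (0:ℝ) ≤ ‖T₁‖ := norm_nonneg _
  have e : (S₁ * S₂) x - (T₁ * T₂) x = (S₁ (S₂ x) - T₁ (S₂ x)) + (T₁ (S₂ x) - T₁ (T₂ x)) := by
    simp only [ContinuousLinearMap.mul_apply]; abel
  rw [e]
  have h5 : ‖T₁‖ * ‖S₂ x - T₂ x‖ < ε / 2 := by
    rw [lt_div_iff₀ (by positivity)] at key3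
    nlinarith [norm_nonneg (S₂ x - T₂ x)]
  calc ‖(S₁ (S₂ x) - T₁ (S₂ x)) + (T₁ (S₂ x) - T₁ (T₂ x))‖
      ≤ ‖S₁ (S₂ x) - T₁ (S₂ x)‖ + ‖T₁ (S₂ x) - T₁ (T₂ x)‖ := norm_add_le _ _
    _ < ε := by linarith

lemma mem_XF_apply {C : Set (X →L[ℝ] X)} {T : X →L[ℝ] X} (hT : T ∈ AF C) (x : X) :
    T x ∈ XF C :=
  Submodule.subset_span ⟨T, hT, x, rfl⟩

/-- Orbit exactness: in a transitive algebra with enough closure properties,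
every element of `X^F` is exactly `T u` for some finite-rank `T` in the algebra. -/
lemma orbit_lemma (C : Set (X →L[ℝ] X))
    (h0 : (0 : X →L[ℝ] X) ∈ C)
    (hadd : ∀ {T S : X →L[ℝ] X}, T ∈ C → S ∈ C → T + S ∈ C)
    (hsmul : ∀ (c : ℝ) {T : X →L[ℝ] X}, T ∈ C → c • T ∈ C)
    (hmul : ∀ {T S : X →L[ℝ] X}, T ∈ C → S ∈ C → T * S ∈ C)
    (htrans : IsTransitiveAlg C)
    {u : X} (hu : u ≠ 0) {w : X} (hw : w ∈ XF C) :
    ∃ T ∈ AF C, T u = w := by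
  let O : Submodule ℝ X :=
    { carrier := {w | ∃ T ∈ AF C, T u = w}
      add_mem' := by
        rintro a b ⟨T₁, hT₁, rfl⟩ ⟨T₂, hT₂, rfl⟩
        exact ⟨T₁ + T₂, ⟨hadd hT₁.1 hT₂.1, hT₁.2.add hT₂.2⟩, by simp⟩
      zero_mem' := ⟨0, ⟨h0, finiteRank_zero⟩, by simp⟩
      smul_mem' := by
        rintro c a ⟨T, hT, rfl⟩
        exact ⟨c • T, ⟨hsmul c hT.1, hT.2.smul c⟩, by simp⟩ }
  suffices hsuff : w ∈ O from hsuff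
  refine Submodule.span_le.2 ?_ hw
  rintro y ⟨T, hT, x, rfl⟩
  rcases eq_or_ne x 0 with rfl | hx
  · have : T (0 : X) = 0 := map_zero T
    rw [this]; exact O.zero_mem
  · let J : Submodule ℝ X :=
      { carrier := {v | ∃ S ∈ C, T (S u) = v}
        add_mem' := by
          rintro a b ⟨S₁, hS₁, rfl⟩ ⟨S₂, hS₂, rfl⟩
          exact ⟨S₁ + S₂, hadd hS₁ hS₂, by simp⟩
        zero_mem' := ⟨0, h0, by simp⟩
        smul_mem' := by
          rintro c a ⟨S, hS, rfl⟩
          exact ⟨c • S, hsmul c hS, by simp⟩ }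
    have hJle : J ≤ LinearMap.range (T : X →ₗ[ℝ] X) := by
      rintro v ⟨S, _, rfl⟩
      exact ⟨S u, rfl⟩
    have hfr : FiniteDimensional ℝ (LinearMap.range (T : X →ₗ[ℝ] X)) := hT.2
    have hJfd : FiniteDimensional ℝ J := Submodule.finiteDimensional_of_le hJle
    have hclosed : IsClosed (J : Set X) := Submodule.closed_of_finiteDimensional J
    have hmem : T x ∈ closure (J : Set X) := by
      rw [Metric.mem_closure_iff]
      intro ε hε
      obtain ⟨S, hS, hSx⟩ := htrans u hu x (ε / (‖T‖ + 1)) (by positivity)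
      refine ⟨T (S u), ⟨S, hS, rfl⟩, ?_⟩
      rw [dist_eq_norm]
      have e1 : ‖T x - T (S u)‖ ≤ ‖T‖ * ‖x - S u‖ := by
        rw [← map_sub]; exact T.le_opNorm _
      have e2 : ‖x - S u‖ < ε / (‖T‖ + 1) := by rwa [norm_sub_rev]
      have e3 : (0:ℝ) ≤ ‖T‖ := norm_nonneg _
      rw [lt_div_iff₀ (by positivity)] at e2
      nlinarith [norm_nonneg (x - S u)]
    rw [hclosed.closure_eq] at hmem
    obtain ⟨S, hS, hSv⟩ := hmem
    exact ⟨T * S, ⟨hmul hT.1 hS, hT.2.mul S⟩, hSv⟩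

/-- Nondegeneracy: a nonzero vector is not annihilated by all of `A^F`. -/
lemma exists_AF_ne (hA : IsLSet (A : Set (X →L[ℝ] X))) {w : X} (hw : w ≠ 0) :
    ∃ T ∈ AF (A : Set (X →L[ℝ] X)), T w ≠ 0 := by
  obtain ⟨T₀, hT₀A, hT₀ne, hT₀fr⟩ := hA.2
  have hy : ∃ y, T₀ y ≠ 0 := by
    by_contra h
    push_neg at h
    exact hT₀ne (ContinuousLinearMap.ext fun y => by simp [h y])
  obtain ⟨y, hy⟩ := hy
  obtain ⟨S, hS, hSw⟩ := hA.1 w hw y (‖T₀ y‖ / (‖T₀‖ + 1)) (div_pos (norm_pos_iff.2 hy) (by positivity))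
  refine ⟨T₀ * S, ⟨mul_mem hT₀A hS, hT₀fr.mul S⟩, fun hc => ?_⟩
  have h1 : T₀ (S w) = 0 := by
    have : (T₀ * S) w = T₀ (S w) := rfl
    rw [← this, hc]
  have h2 : ‖T₀ y‖ ≤ ‖T₀‖ * ‖S w - y‖ := by
    have e : ‖T₀ (S w) - T₀ y‖ ≤ ‖T₀‖ * ‖S w - y‖ := by
      rw [← map_sub]; exact T₀.le_opNorm _
    rwa [h1, zero_sub, norm_neg] at e
  rw [lt_div_iff₀ (by positivity)] at hSw
  have h3 : (0:ℝ) ≤ ‖T₀‖ := norm_nonneg _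
  have h4 : (0:ℝ) < ‖T₀ y‖ := norm_pos_iff.2 hy
  nlinarith [norm_nonneg (S w - y)]

end Stmt8Aux
section Stmt8Main

variable {X : Type*} [NormedAddCommGroup X] [NormedSpace ℝ X]
variable (A : NonUnitalSubalgebra ℝ (X →L[ℝ] X))

set_option maxHeartbeats 1000000 in
/-- Key lemma: if `D` commutes with the restrictions of all finite-rank members of `A`,
`T''` is in the SOT closure of `A`, and `T''` kills `u'`, then `T''` kills `D u'`. -/
lemma star_lemma (hA : IsLSet (A : Set (X →L[ℝ] X)))
    {D : Module.End ℝ (XF (A : Set (X →L[ℝ] X)))} (hD : D ∈ DD (A : Set (X →L[ℝ] X)))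
    (u' : XF (A : Set (X →L[ℝ] X))) {T'' : X →L[ℝ] X}
    (hT'' : T'' ∈ SOTcl (A : Set (X →L[ℝ] X)))
    (h0 : T'' (u' : X) = 0) :
    T'' ((D u' : XF (A : Set (X →L[ℝ] X))) : X) = 0 := by
  classical
  by_contra hne
  obtain ⟨T, hT, hTne⟩ := exists_AF_ne A hA hne
  have hfr : FiniteDimensional ℝ (LinearMap.range (T : X →ₗ[ℝ] X)) := hT.2
  set W : Submodule ℝ (XF (A : Set (X →L[ℝ] X))) :=
    (LinearMap.range (T : X →ₗ[ℝ] X)).comap (XF (A : Set (X →L[ℝ] X))).subtype with hWdef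
  have hWfd : FiniteDimensional ℝ W := by
    refine FiniteDimensional.of_injective
      (LinearMap.codRestrict (LinearMap.range (T : X →ₗ[ℝ] X))
        ((XF (A : Set (X →L[ℝ] X))).subtype.comp W.subtype) fun z => z.2) ?_
    intro a b hab
    have h1 := congrArg Subtype.val hab
    exact Subtype.ext (Subtype.ext h1)
  set f : W →L[ℝ] X := LinearMap.toContinuousLinearMap
    ((XF (A : Set (X →L[ℝ] X))).subtype ∘ₗ
      (D : XF (A : Set (X →L[ℝ] X)) →ₗ[ℝ] XF (A : Set (X →L[ℝ] X))) ∘ₗ W.subtype) with hfdef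
  set ε := ‖T (T'' ((D u' : XF (A : Set (X →L[ℝ] X))) : X))‖ with hε
  have hεpos : 0 < ε := norm_pos_iff.2 hTne
  have hTpos : (0:ℝ) ≤ ‖T‖ := norm_nonneg _
  have hfpos : (0:ℝ) ≤ ‖f‖ := ContinuousLinearMap.opNorm_nonneg f
  set δ := ε / ((‖T‖ + 1) * (‖f‖ + 1)) with hδ
  have hδpos : 0 < δ := by positivity
  obtain ⟨S, hS, hSapp⟩ := hT'' δ hδpos
    {(u' : X), ((D u' : XF (A : Set (X →L[ℝ] X))) : X)}
  have h1 : ‖S (u' : X)‖ < δ := by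
    have := hSapp _ (Finset.mem_insert_self _ _)
    rwa [h0, sub_zero] at this
  have h2 : ‖S ((D u' : XF (A : Set (X →L[ℝ] X))) : X) -
      T'' ((D u' : XF (A : Set (X →L[ℝ] X))) : X)‖ < δ :=
    hSapp _ (Finset.mem_insert_of_mem (Finset.mem_singleton_self _))
  have hTS : T * S ∈ AF (A : Set (X →L[ℝ] X)) := ⟨mul_mem hT.1 hS, hT.2.mul S⟩
  set g : Module.End ℝ (XF (A : Set (X →L[ℝ] X))) :=
    ((T * S : X →L[ℝ] X) : X →ₗ[ℝ] X).restrict (mapsto_XF hTS) with hgdef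
  have hcomm := (Subalgebra.mem_centralizer_iff ℝ).1 hD g ⟨T * S, hTS, rfl⟩
  have hgD : g (D u') = D (g u') := by
    have := congrArg (fun (h : Module.End ℝ (XF (A : Set (X →L[ℝ] X)))) => h u') hcomm
    simpa [Module.End.mul_apply] using this
  have hgcoe : ∀ ξ : XF (A : Set (X →L[ℝ] X)), ((g ξ : XF (A : Set (X →L[ℝ] X))) : X)
      = T (S (ξ : X)) := by
    intro ξ
    rw [hgdef, LinearMap.restrict_coe_apply]
    rfl
  have hq : g u' ∈ W := by
    rw [hWdef, Submodule.mem_comap, Submodule.subtype_apply, hgcoe]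
    exact ⟨S (u' : X), rfl⟩
  have hDq : ((D (g u') : XF (A : Set (X →L[ℝ] X))) : X) = f ⟨g u', hq⟩ := by
    rw [hfdef]
    rw [LinearMap.coe_toContinuousLinearMap']
    rfl
  have e3 : T (S ((D u' : XF (A : Set (X →L[ℝ] X))) : X)) = f ⟨g u', hq⟩ := by
    rw [← hDq, ← hgD, hgcoe]
  have e2 : ‖T (T'' ((D u' : XF (A : Set (X →L[ℝ] X))) : X) -
      S ((D u' : XF (A : Set (X →L[ℝ] X))) : X))‖ ≤ ‖T‖ * δ := by
    refine (T.le_opNorm _).trans ?_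
    have := (norm_sub_rev _ _).le.trans_lt h2
    nlinarith [norm_nonneg (T'' ((D u' : XF (A : Set (X →L[ℝ] X))) : X) -
      S ((D u' : XF (A : Set (X →L[ℝ] X))) : X))]
  have e4 : ‖f ⟨g u', hq⟩‖ ≤ ‖f‖ * (‖T‖ * δ) := by
    refine (f.le_opNorm _).trans ?_
    have hn : ‖(⟨g u', hq⟩ : W)‖ = ‖T (S (u' : X))‖ := by
      rw [← hgcoe]; rfl
    rw [hn]
    have h5 : ‖T (S (u' : X))‖ ≤ ‖T‖ * ‖S (u' : X)‖ := T.le_opNorm _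
    calc ‖f‖ * ‖T (S (u' : X))‖ ≤ ‖f‖ * (‖T‖ * ‖S (u' : X)‖) :=
          mul_le_mul_of_nonneg_left h5 hfpos
      _ ≤ ‖f‖ * (‖T‖ * δ) :=
          mul_le_mul_of_nonneg_left (mul_le_mul_of_nonneg_left h1.le hTpos) hfpos
  have esplit : T (T'' ((D u' : XF (A : Set (X →L[ℝ] X))) : X))
      = T (T'' ((D u' : XF (A : Set (X →L[ℝ] X))) : X) -
          S ((D u' : XF (A : Set (X →L[ℝ] X))) : X)) +
        T (S ((D u' : XF (A : Set (X →L[ℝ] X))) : X)) := by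
    rw [map_sub]; abel
  have efinal : ε ≤ ‖T‖ * δ + ‖f‖ * (‖T‖ * δ) := by
    rw [hε, esplit]
    refine (norm_add_le _ _).trans ?_
    rw [e3]
    linarith
  have hval : (‖T‖ + 1) * (‖f‖ + 1) * δ = ε := by
    rw [hδ]; field_simp
  nlinarith

set_option maxHeartbeats 2000000 in
set_option synthInstance.maxHeartbeats 1000000 in
/-- The commutants of an L-algebra and of its SOT closure are isomorphic. -/
lemma DD_equiv (hA : IsLSet (A : Set (X →L[ℝ] X))) :
    Nonempty ((DD (SOTcl (A : Set (X →L[ℝ] X)))) ≃ₐ[ℝ] (DD (A : Set (X →L[ℝ] X)))) := by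
  classical
  have hBsub : (A : Set (X →L[ℝ] X)) ⊆ SOTcl (A : Set (X →L[ℝ] X)) := subset_SOTcl _
  have hBtrans : IsTransitiveAlg (SOTcl (A : Set (X →L[ℝ] X))) := by
    intro x hx y ε hε
    obtain ⟨T, hT, h⟩ := hA.1 x hx y ε hε
    exact ⟨T, hBsub hT, h⟩
  have hAFle : AF (A : Set (X →L[ℝ] X)) ⊆ AF (SOTcl (A : Set (X →L[ℝ] X))) :=
    fun T hT => ⟨hBsub hT.1, hT.2⟩
  have hXFle : XF (A : Set (X →L[ℝ] X)) ≤ XF (SOTcl (A : Set (X →L[ℝ] X))) :=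
    Submodule.span_mono (by rintro y ⟨T, hT, x, rfl⟩; exact ⟨T, hAFle hT, x, rfl⟩)
  obtain ⟨T₀, hT₀A, hT₀ne, hT₀fr⟩ := hA.2
  have hx₀ : ∃ x, T₀ x ≠ 0 := by
    by_contra h; push_neg at h
    exact hT₀ne (ContinuousLinearMap.ext fun y => by simp [h y])
  obtain ⟨x₀, hu0⟩ := hx₀
  have huA : T₀ x₀ ∈ XF (A : Set (X →L[ℝ] X)) := mem_XF_apply ⟨hT₀A, hT₀fr⟩ x₀
  have huB : T₀ x₀ ∈ XF (SOTcl (A : Set (X →L[ℝ] X))) := hXFle huA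
  set u : X := T₀ x₀ with hudef
  have orbitA : ∀ w : XF (A : Set (X →L[ℝ] X)),
      ∃ T ∈ AF (A : Set (X →L[ℝ] X)), T u = (w : X) :=
    fun w => orbit_lemma _ (zero_mem A) (fun h1 h2 => add_mem h1 h2)
      (fun c {T} h => SMulMemClass.smul_mem c h) (fun h1 h2 => mul_mem h1 h2) hA.1 hu0 w.2
  have orbitB : ∀ w : XF (SOTcl (A : Set (X →L[ℝ] X))),
      ∃ T ∈ AF (SOTcl (A : Set (X →L[ℝ] X))), T u = (w : X) :=
    fun w => orbit_lemma _ (hBsub (zero_mem A)) (fun h1 h2 => SOTcl_add A h1 h2)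
      (fun c {T} h => SOTcl_smul A c h) (fun h1 h2 => SOTcl_mul A h1 h2) hBtrans hu0 w.2
  set uhatA : XF (A : Set (X →L[ℝ] X)) := ⟨u, huA⟩ with huhatA
  set uhatB : XF (SOTcl (A : Set (X →L[ℝ] X))) := ⟨u, huB⟩ with huhatB
  choose repB hrepB hrepBu using orbitB
  -- element-level commutation facts
  have commA : ∀ (D : Module.End ℝ (XF (A : Set (X →L[ℝ] X)))), D ∈ DD (A : Set (X →L[ℝ] X)) →
      ∀ {T : X →L[ℝ] X} (hT : T ∈ AF (A : Set (X →L[ℝ] X))) (v : XF (A : Set (X →L[ℝ] X))),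
      ((D (((T : X →ₗ[ℝ] X)).restrict (mapsto_XF hT) v) : XF (A : Set (X →L[ℝ] X))) : X)
        = T ((D v : XF (A : Set (X →L[ℝ] X))) : X) := by
    intro D hD T hT v
    have hcomm := (Subalgebra.mem_centralizer_iff ℝ).1 hD _ ⟨T, hT, rfl⟩
    have h := congrArg (fun (h : Module.End ℝ (XF (A : Set (X →L[ℝ] X)))) => h v) hcomm
    simp only [Module.End.mul_apply] at h
    rw [← h, LinearMap.restrict_coe_apply]
    rfl
  have commB : ∀ (D' : Module.End ℝ (XF (SOTcl (A : Set (X →L[ℝ] X))))),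
      D' ∈ DD (SOTcl (A : Set (X →L[ℝ] X))) →
      ∀ {T : X →L[ℝ] X} (hT : T ∈ AF (SOTcl (A : Set (X →L[ℝ] X))))
        (ξ : XF (SOTcl (A : Set (X →L[ℝ] X)))),
      ((D' (((T : X →ₗ[ℝ] X)).restrict (mapsto_XF hT) ξ) : XF (SOTcl (A : Set (X →L[ℝ] X)))) : X)
        = T ((D' ξ : XF (SOTcl (A : Set (X →L[ℝ] X)))) : X) := by
    intro D' hD' T hT ξ
    have hcomm := (Subalgebra.mem_centralizer_iff ℝ).1 hD' _ ⟨T, hT, rfl⟩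
    have h := congrArg
      (fun (h : Module.End ℝ (XF (SOTcl (A : Set (X →L[ℝ] X))))) => h ξ) hcomm
    simp only [Module.End.mul_apply] at h
    rw [← h, LinearMap.restrict_coe_apply]
    rfl
  -- well-definedness
  have welldef : ∀ (D : Module.End ℝ (XF (A : Set (X →L[ℝ] X)))),
      D ∈ DD (A : Set (X →L[ℝ] X)) →
      ∀ {T₁ T₂ : X →L[ℝ] X}, T₁ ∈ SOTcl (A : Set (X →L[ℝ] X)) →
      T₂ ∈ SOTcl (A : Set (X →L[ℝ] X)) → T₁ u = T₂ u →
      T₁ ((D uhatA : XF (A : Set (X →L[ℝ] X))) : X)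
        = T₂ ((D uhatA : XF (A : Set (X →L[ℝ] X))) : X) := by
    intro D hD T₁ T₂ h₁ h₂ h12
    have hsub : T₁ - T₂ ∈ SOTcl (A : Set (X →L[ℝ] X)) := by
      have h3 := SOTcl_add A h₁ (SOTcl_smul A (-1) h₂)
      rwa [neg_one_smul, ← sub_eq_add_neg] at h3
    have h0 : (T₁ - T₂) (uhatA : X) = 0 := by
      rw [ContinuousLinearMap.sub_apply]
      show T₁ u - T₂ u = 0
      rw [h12, sub_self]
    have hstar := star_lemma A hA hD uhatA hsub h0
    rw [ContinuousLinearMap.sub_apply, sub_eq_zero] at hstar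
    exact hstar
  have key : ∀ (D : Module.End ℝ (XF (A : Set (X →L[ℝ] X)))),
      D ∈ DD (A : Set (X →L[ℝ] X)) →
      ∀ {T : X →L[ℝ] X}, T ∈ SOTcl (A : Set (X →L[ℝ] X)) →
      ∀ w : XF (SOTcl (A : Set (X →L[ℝ] X))), T u = (w : X) →
      repB w ((D uhatA : XF (A : Set (X →L[ℝ] X))) : X)
        = T ((D uhatA : XF (A : Set (X →L[ℝ] X))) : X) :=
    fun D hD T hT w hTu =>
      welldef D hD (hrepB w).1 hT (by rw [hrepBu w, hTu])
  -- the forward map: restriction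
  have Φmem : ∀ (D' : Module.End ℝ (XF (SOTcl (A : Set (X →L[ℝ] X))))),
      D' ∈ DD (SOTcl (A : Set (X →L[ℝ] X))) →
      ∀ v : XF (A : Set (X →L[ℝ] X)),
      (((XF (SOTcl (A : Set (X →L[ℝ] X)))).subtype ∘ₗ D' ∘ₗ Submodule.inclusion hXFle) v)
        ∈ XF (A : Set (X →L[ℝ] X)) := by
    intro D' hD' v
    obtain ⟨T, hT, hTu⟩ := orbitA v
    have hTB := hAFle hT
    have hkey : Submodule.inclusion hXFle v
        = ((T : X →ₗ[ℝ] X).restrict (mapsto_XF hTB)) uhatB := by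
      apply Subtype.ext
      rw [Submodule.coe_inclusion, LinearMap.restrict_coe_apply]
      exact hTu.symm
    simp only [LinearMap.comp_apply, Submodule.subtype_apply]
    rw [hkey, commB D' hD' hTB uhatB]
    exact mem_XF_apply hT _
  have Φcent : ∀ (D' : Module.End ℝ (XF (SOTcl (A : Set (X →L[ℝ] X)))))
      (hD' : D' ∈ DD (SOTcl (A : Set (X →L[ℝ] X)))),
      LinearMap.codRestrict (XF (A : Set (X →L[ℝ] X)))
        ((XF (SOTcl (A : Set (X →L[ℝ] X)))).subtype ∘ₗ D' ∘ₗ Submodule.inclusion hXFle)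
        (Φmem D' hD') ∈ DD (A : Set (X →L[ℝ] X)) := by
    intro D' hD'
    refine (Subalgebra.mem_centralizer_iff ℝ).2 ?_
    rintro g ⟨T, hT, rfl⟩
    have hTB := hAFle hT
    apply LinearMap.ext
    intro v
    apply Subtype.ext
    have hι : Submodule.inclusion hXFle (((T : X →ₗ[ℝ] X)).restrict (mapsto_XF hT) v)
        = ((T : X →ₗ[ℝ] X)).restrict (mapsto_XF hTB) (Submodule.inclusion hXFle v) := by
      apply Subtype.ext
      rw [Submodule.coe_inclusion, LinearMap.restrict_coe_apply,
        LinearMap.restrict_coe_apply, Submodule.coe_inclusion]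
    show T ((((XF (SOTcl (A : Set (X →L[ℝ] X)))).subtype ∘ₗ D' ∘ₗ
        Submodule.inclusion hXFle) v)) = _
    calc T ((((XF (SOTcl (A : Set (X →L[ℝ] X)))).subtype ∘ₗ D' ∘ₗ
          Submodule.inclusion hXFle) v))
        = T ((D' (Submodule.inclusion hXFle v) : XF (SOTcl (A : Set (X →L[ℝ] X)))) : X) := rfl
      _ = ((D' (((T : X →ₗ[ℝ] X)).restrict (mapsto_XF hTB)
            (Submodule.inclusion hXFle v)) : XF (SOTcl (A : Set (X →L[ℝ] X)))) : X) :=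
          (commB D' hD' hTB _).symm
      _ = _ := by rw [← hι]; rfl
  -- the backward map
  have Ψadd : ∀ (D : Module.End ℝ (XF (A : Set (X →L[ℝ] X)))),
      D ∈ DD (A : Set (X →L[ℝ] X)) →
      ∀ w₁ w₂ : XF (SOTcl (A : Set (X →L[ℝ] X))),
      repB (w₁ + w₂) ((D uhatA : XF (A : Set (X →L[ℝ] X))) : X)
        = repB w₁ ((D uhatA : XF (A : Set (X →L[ℝ] X))) : X)
          + repB w₂ ((D uhatA : XF (A : Set (X →L[ℝ] X))) : X) := by
    intro D hD w₁ w₂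
    have h := key D hD (SOTcl_add A (hrepB w₁).1 (hrepB w₂).1) (w₁ + w₂)
      (by rw [ContinuousLinearMap.add_apply, hrepBu w₁, hrepBu w₂]; rfl)
    rw [h, ContinuousLinearMap.add_apply]
  have Ψsmul : ∀ (D : Module.End ℝ (XF (A : Set (X →L[ℝ] X)))),
      D ∈ DD (A : Set (X →L[ℝ] X)) →
      ∀ (c : ℝ) (w : XF (SOTcl (A : Set (X →L[ℝ] X)))),
      repB (c • w) ((D uhatA : XF (A : Set (X →L[ℝ] X))) : X)
        = c • repB w ((D uhatA : XF (A : Set (X →L[ℝ] X))) : X) := by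
    intro D hD c w
    have h := key D hD (SOTcl_smul A c (hrepB w).1) (c • w)
      (by rw [ContinuousLinearMap.smul_apply, hrepBu w]; rfl)
    rw [h, ContinuousLinearMap.smul_apply]
  have Ψmem : ∀ (D : Module.End ℝ (XF (A : Set (X →L[ℝ] X)))),
      ∀ w : XF (SOTcl (A : Set (X →L[ℝ] X))),
      repB w ((D uhatA : XF (A : Set (X →L[ℝ] X))) : X) ∈ XF (SOTcl (A : Set (X →L[ℝ] X))) :=
    fun D w => mem_XF_apply (hrepB w) _
  -- bundled backward linear maps
  let Ψ0 : ∀ (D : Module.End ℝ (XF (A : Set (X →L[ℝ] X)))),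
      D ∈ DD (A : Set (X →L[ℝ] X)) → Module.End ℝ (XF (SOTcl (A : Set (X →L[ℝ] X)))) :=
    fun D hD => LinearMap.codRestrict (XF (SOTcl (A : Set (X →L[ℝ] X))))
      { toFun := fun w => repB w ((D uhatA : XF (A : Set (X →L[ℝ] X))) : X)
        map_add' := Ψadd D hD
        map_smul' := Ψsmul D hD }
      (Ψmem D)
  have Ψ0coe : ∀ (D : Module.End ℝ (XF (A : Set (X →L[ℝ] X))))
      (hD : D ∈ DD (A : Set (X →L[ℝ] X))) (w : XF (SOTcl (A : Set (X →L[ℝ] X)))),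
      ((Ψ0 D hD w : XF (SOTcl (A : Set (X →L[ℝ] X)))) : X)
        = repB w ((D uhatA : XF (A : Set (X →L[ℝ] X))) : X) := fun D hD w => rfl
  have Ψcent : ∀ (D : Module.End ℝ (XF (A : Set (X →L[ℝ] X))))
      (hD : D ∈ DD (A : Set (X →L[ℝ] X))),
      Ψ0 D hD ∈ DD (SOTcl (A : Set (X →L[ℝ] X))) := by
    intro D hD
    refine (Subalgebra.mem_centralizer_iff ℝ).2 ?_
    rintro g ⟨S'', hS'', rfl⟩
    apply LinearMap.ext
    intro ξ
    apply Subtype.ext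
    have h1 : ((((S'' : X →ₗ[ℝ] X)).restrict (mapsto_XF hS'') (Ψ0 D hD ξ) :
        XF (SOTcl (A : Set (X →L[ℝ] X)))) : X)
        = S'' (repB ξ ((D uhatA : XF (A : Set (X →L[ℝ] X))) : X)) := by
      rw [LinearMap.restrict_coe_apply, Ψ0coe D hD]
      rfl
    have h2 : ((Ψ0 D hD (((S'' : X →ₗ[ℝ] X)).restrict (mapsto_XF hS'') ξ) :
        XF (SOTcl (A : Set (X →L[ℝ] X)))) : X)
        = S'' (repB ξ ((D uhatA : XF (A : Set (X →L[ℝ] X))) : X)) := by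
      rw [Ψ0coe D hD]
      have h := key D hD (SOTcl_mul A hS''.1 (hrepB ξ).1)
        ((((S'' : X →ₗ[ℝ] X)).restrict (mapsto_XF hS'') ξ))
        (by rw [ContinuousLinearMap.mul_apply, hrepBu ξ, LinearMap.restrict_coe_apply]; rfl)
      rw [h, ContinuousLinearMap.mul_apply]
    show ((((S'' : X →ₗ[ℝ] X)).restrict (mapsto_XF hS'') (Ψ0 D hD ξ) :
        XF (SOTcl (A : Set (X →L[ℝ] X)))) : X) = _
    rw [h1, ← h2]
    rfl
  -- bundle everything
  let Φf : (DD (SOTcl (A : Set (X →L[ℝ] X)))) → (DD (A : Set (X →L[ℝ] X))) :=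
    fun D' => ⟨LinearMap.codRestrict (XF (A : Set (X →L[ℝ] X)))
      ((XF (SOTcl (A : Set (X →L[ℝ] X)))).subtype ∘ₗ D'.1 ∘ₗ Submodule.inclusion hXFle)
      (Φmem D'.1 D'.2), Φcent D'.1 D'.2⟩
  let Ψf : (DD (A : Set (X →L[ℝ] X))) → (DD (SOTcl (A : Set (X →L[ℝ] X)))) :=
    fun D => ⟨Ψ0 D.1 D.2, Ψcent D.1 D.2⟩
  have Φfcoe : ∀ (D' : DD (SOTcl (A : Set (X →L[ℝ] X)))) (v : XF (A : Set (X →L[ℝ] X))),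
      (((Φf D').1 v : XF (A : Set (X →L[ℝ] X))) : X)
        = ((D'.1 (Submodule.inclusion hXFle v) : XF (SOTcl (A : Set (X →L[ℝ] X)))) : X) :=
    fun D' v => rfl
  have hιuhatA : Submodule.inclusion hXFle uhatA = uhatB := Subtype.ext rfl
  -- left inverse
  have hleft : ∀ D', Ψf (Φf D') = D' := by
    intro D'
    apply Subtype.ext
    apply LinearMap.ext
    intro ξ
    apply Subtype.ext
    have h1 : (((Ψf (Φf D')).1 ξ : XF (SOTcl (A : Set (X →L[ℝ] X)))) : X)
        = repB ξ (((Φf D').1 uhatA : XF (A : Set (X →L[ℝ] X))) : X) := rfl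
    rw [h1, Φfcoe D' uhatA, hιuhatA]
    have hgξ : ((repB ξ : X →ₗ[ℝ] X)).restrict (mapsto_XF (hrepB ξ)) uhatB = ξ := by
      apply Subtype.ext
      rw [LinearMap.restrict_coe_apply]
      exact hrepBu ξ
    calc repB ξ ((D'.1 uhatB : XF (SOTcl (A : Set (X →L[ℝ] X)))) : X)
        = ((D'.1 (((repB ξ : X →ₗ[ℝ] X)).restrict (mapsto_XF (hrepB ξ)) uhatB) :
            XF (SOTcl (A : Set (X →L[ℝ] X)))) : X) := (commB D'.1 D'.2 (hrepB ξ) uhatB).symm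
      _ = ((D'.1 ξ : XF (SOTcl (A : Set (X →L[ℝ] X)))) : X) := by rw [hgξ]
  -- right inverse
  have hright : ∀ D, Φf (Ψf D) = D := by
    intro D
    apply Subtype.ext
    apply LinearMap.ext
    intro v
    apply Subtype.ext
    obtain ⟨T, hT, hTu⟩ := orbitA v
    have h1 : (((Φf (Ψf D)).1 v : XF (A : Set (X →L[ℝ] X))) : X)
        = repB (Submodule.inclusion hXFle v) ((D.1 uhatA : XF (A : Set (X →L[ℝ] X))) : X) := rfl
    rw [h1]
    have h2 := key D.1 D.2 (hBsub hT.1) (Submodule.inclusion hXFle v)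
      (by rw [Submodule.coe_inclusion]; exact hTu)
    rw [h2]
    have hgv : ((T : X →ₗ[ℝ] X)).restrict (mapsto_XF hT) uhatA = v := by
      apply Subtype.ext
      rw [LinearMap.restrict_coe_apply]
      exact hTu
    calc T ((D.1 uhatA : XF (A : Set (X →L[ℝ] X))) : X)
        = ((D.1 (((T : X →ₗ[ℝ] X)).restrict (mapsto_XF hT) uhatA) :
            XF (A : Set (X →L[ℝ] X))) : X) := (commA D.1 D.2 hT uhatA).symm
      _ = ((D.1 v : XF (A : Set (X →L[ℝ] X))) : X) := by rw [hgv]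
  -- linear equivalence
  let l : (DD (SOTcl (A : Set (X →L[ℝ] X)))) ≃ₗ[ℝ] (DD (A : Set (X →L[ℝ] X))) :=
    { toFun := Φf
      map_add' := by
        intro D₁ D₂
        apply Subtype.ext
        apply LinearMap.ext
        intro v
        apply Subtype.ext
        show (((D₁ + D₂ : DD (SOTcl (A : Set (X →L[ℝ] X)))).1
            (Submodule.inclusion hXFle v) : XF (SOTcl (A : Set (X →L[ℝ] X)))) : X) = _
        rw [show ((D₁ + D₂ : DD (SOTcl (A : Set (X →L[ℝ] X)))).1 : Module.End ℝ _)
            = D₁.1 + D₂.1 from rfl]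
        rw [LinearMap.add_apply]
        rfl
      map_smul' := by
        intro c D₁
        apply Subtype.ext
        apply LinearMap.ext
        intro v
        apply Subtype.ext
        show (((c • D₁ : DD (SOTcl (A : Set (X →L[ℝ] X)))).1
            (Submodule.inclusion hXFle v) : XF (SOTcl (A : Set (X →L[ℝ] X)))) : X) = _
        rw [show ((c • D₁ : DD (SOTcl (A : Set (X →L[ℝ] X)))).1 : Module.End ℝ _)
            = c • D₁.1 from rfl]
        rw [LinearMap.smul_apply]
        rfl
      invFun := Ψf
      left_inv := hleft
      right_inv := hright }
  have map_one : l 1 = 1 := by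
    apply Subtype.ext
    apply LinearMap.ext
    intro v
    apply Subtype.ext
    show (((1 : DD (SOTcl (A : Set (X →L[ℝ] X)))).1
        (Submodule.inclusion hXFle v) : XF (SOTcl (A : Set (X →L[ℝ] X)))) : X) = _
    rw [show ((1 : DD (SOTcl (A : Set (X →L[ℝ] X)))).1 : Module.End ℝ _) = 1 from rfl]
    rfl
  have map_mul : ∀ D₁ D₂, l (D₁ * D₂) = l D₁ * l D₂ := by
    intro D₁ D₂
    apply Subtype.ext
    apply LinearMap.ext
    intro v
    apply Subtype.ext
    have hmul : ((D₁ * D₂ : DD (SOTcl (A : Set (X →L[ℝ] X)))).1 : Module.End ℝ _)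
        = D₁.1 * D₂.1 := rfl
    show (((D₁ * D₂ : DD (SOTcl (A : Set (X →L[ℝ] X)))).1
        (Submodule.inclusion hXFle v) : XF (SOTcl (A : Set (X →L[ℝ] X)))) : X) = _
    rw [hmul, Module.End.mul_apply]
    have hι2 : Submodule.inclusion hXFle ((Φf D₂).1 v) = D₂.1 (Submodule.inclusion hXFle v) :=
      Subtype.ext rfl
    show ((D₁.1 (D₂.1 (Submodule.inclusion hXFle v)) :
        XF (SOTcl (A : Set (X →L[ℝ] X)))) : X) = _
    rw [← hι2]
    rfl
  exact ⟨AlgEquiv.ofLinearEquiv l map_one map_mul⟩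

end Stmt8Main

/-- An L-algebra `𝒜` is of real (resp. complex, quaternion) type iff its
SOT-closure (which is again an L-algebra) is of real (resp. complex, quaternion) type. -/
theorem stmt8 {X : Type*} [NormedAddCommGroup X] [NormedSpace ℝ X] [CompleteSpace X]
    (hinf : ¬ FiniteDimensional ℝ X)
    (A : NonUnitalSubalgebra ℝ (X →L[ℝ] X))
    (hA : IsLSet (A : Set (X →L[ℝ] X))) :
    IsLSet (SOTcl (A : Set (X →L[ℝ] X))) ∧
    (RealType (A : Set (X →L[ℝ] X)) ↔ RealType (SOTcl (A : Set (X →L[ℝ] X)))) ∧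
    (ComplexType (A : Set (X →L[ℝ] X)) ↔ ComplexType (SOTcl (A : Set (X →L[ℝ] X)))) ∧
    (QuaternionType (A : Set (X →L[ℝ] X)) ↔
      QuaternionType (SOTcl (A : Set (X →L[ℝ] X)))) := by
  classical
  obtain ⟨e⟩ := DD_equiv A hA
  obtain ⟨T₀, hT₀A, hT₀ne, hT₀fr⟩ := hA.2
  have hBsub : (A : Set (X →L[ℝ] X)) ⊆ SOTcl (A : Set (X →L[ℝ] X)) := subset_SOTcl _
  refine ⟨⟨?_, T₀, hBsub hT₀A, hT₀ne, hT₀fr⟩, ?_, ?_, ?_⟩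
  · intro x hx y ε hε
    obtain ⟨T, hT, h⟩ := hA.1 x hx y ε hε
    exact ⟨T, hBsub hT, h⟩
  · exact ⟨fun ⟨i⟩ => ⟨e.trans i⟩, fun ⟨i⟩ => ⟨e.symm.trans i⟩⟩
  · exact ⟨fun ⟨i⟩ => ⟨e.trans i⟩, fun ⟨i⟩ => ⟨e.symm.trans i⟩⟩
  · exact ⟨fun ⟨i⟩ => ⟨e.trans i⟩, fun ⟨i⟩ => ⟨e.symm.trans i⟩⟩

end
end
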